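/- arXiv:1802.06482 — 3 statements merged into one kernel-verified Lean document; each statement's English description precedes it below -/
import Mathlib

section
/- Let A ∈ ℝⁿˣⁿ and let L̃ be the projection of A obtained by setting Lᵢᵢ = max(Aᵢᵢ,0) and Lᵢⱼ = min(Aᵢⱼ,0) for i ≠ j with (i,j) ∈ E, zero otherwise. Define L by keeping the off-diagonal entries of L̃ and setting Lᵢᵢ = -Σ_{j≠i} L̃ᵢⱼ. Then L minimizes ‖A - X‖₁ over all X with X·𝟏 = 0, Xᵢᵢ ≥ 0, Xᵢⱼ ≤ 0 for i ≠ j, and Xᵢⱼ = 0 for (i,j) ∉ E with i ≠ j. -/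
/-- Theorem 1 (correctness of Algorithm 1): the matrix `L` obtained from the
entrywise projection `L̃` of `A` by resetting each diagonal entry to minus the
off-diagonal row sum minimizes `‖A - X‖₁` over all graph Laplacians with
support in `E`. -/
theorem stmt_15 (n : ℕ) (A : Matrix (Fin n) (Fin n) ℝ)
    (E : Finset (Fin n × Fin n)) (hE : ∀ p ∈ E, p.1 ≠ p.2)
    (Lt L : Matrix (Fin n) (Fin n) ℝ)
    (hLt : ∀ i j, Lt i j =
      if i = j then max (A i i) 0 else if (i, j) ∈ E then min (A i j) 0 else 0)
    (hLoff : ∀ i j, i ≠ j → L i j = Lt i j)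
    (hLdiag : ∀ i, L i i = -∑ j ∈ Finset.univ.filter (· ≠ i), Lt i j) :
    (L.mulVec (fun _ => 1) = 0 ∧ (∀ i, 0 ≤ L i i) ∧
      (∀ i j, i ≠ j → L i j ≤ 0) ∧ (∀ i j, i ≠ j → (i, j) ∉ E → L i j = 0)) ∧
    ∀ X : Matrix (Fin n) (Fin n) ℝ,
      X.mulVec (fun _ => 1) = 0 → (∀ i, 0 ≤ X i i) →
      (∀ i j, i ≠ j → X i j ≤ 0) → (∀ i j, i ≠ j → (i, j) ∉ E → X i j = 0) →
      ∑ i, ∑ j, |A i j - L i j| ≤ ∑ i, ∑ j, |A i j - X i j| := by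
  have split : ∀ (f : Fin n → ℝ) (i : Fin n),
      ∑ j, f j = f i + ∑ j ∈ Finset.univ.filter (· ≠ i), f j := by
    intro f i
    rw [Finset.filter_ne']
    exact (Finset.add_sum_erase _ _ (Finset.mem_univ i)).symm
  have hLval : ∀ i j, i ≠ j → L i j = if (i, j) ∈ E then min (A i j) 0 else 0 := by
    intro i j hij
    rw [hLoff i j hij, hLt, if_neg hij]
  have hLle : ∀ i j, i ≠ j → L i j ≤ 0 := by
    intro i j hij
    rw [hLval i j hij]
    split
    · exact min_le_right _ _
    · exact le_rfl
  have hLdiag' : ∀ i, L i i = -∑ j ∈ Finset.univ.filter (· ≠ i), L i j := by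
    intro i
    rw [hLdiag i]
    congr 1
    refine Finset.sum_congr rfl fun j hj => ?_
    rw [Finset.mem_filter] at hj
    exact (hLoff i j (Ne.symm hj.2)).symm
  have hsum : ∀ i, ∑ j, L i j = 0 := by
    intro i
    rw [split (fun j => L i j) i, hLdiag' i]
    simp
  refine ⟨⟨?_, ?_, hLle, ?_⟩, ?_⟩
  · funext i
    simp only [Matrix.mulVec, dotProduct, mul_one, Pi.zero_apply]
    exact hsum i
  · intro i
    rw [hLdiag' i]
    have : ∑ j ∈ Finset.univ.filter (· ≠ i), L i j ≤ 0 := by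
      refine Finset.sum_nonpos fun j hj => ?_
      rw [Finset.mem_filter] at hj
      exact hLle i j (Ne.symm hj.2)
    linarith
  · intro i j hij hEij
    rw [hLval i j hij, if_neg hEij]
  · intro X hX1 hX2 hX3 hX4
    have hXrow : ∀ i, X i i = -∑ j ∈ Finset.univ.filter (· ≠ i), X i j := by
      intro i
      have h := congrFun hX1 i
      simp only [Matrix.mulVec, dotProduct, mul_one, Pi.zero_apply] at h
      rw [split (fun j => X i j) i] at h
      linarith
    refine Finset.sum_le_sum fun i _ => ?_
    rw [split (fun j => |A i j - L i j|) i, split (fun j => |A i j - X i j|) i]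
    have hterm : ∀ j ∈ Finset.univ.filter (· ≠ i),
        |A i j - L i j| + |L i j - X i j| ≤ |A i j - X i j| := by
      intro j hj
      have hij : i ≠ j := Ne.symm (Finset.mem_filter.mp hj).2
      rw [hLval i j hij]
      by_cases hE' : (i, j) ∈ E
      · rw [if_pos hE']
        have hx := hX3 i j hij
        rcases le_or_gt 0 (A i j) with h | h
        · rw [min_eq_right h, sub_zero, zero_sub, abs_neg, abs_of_nonneg h,
            abs_of_nonpos hx, abs_of_nonneg (by linarith)]
          linarith
        · rw [min_eq_left h.le, sub_self, abs_zero, zero_add]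
      · rw [if_neg hE', hX4 i j hij hE']
        simp
    have h0 : X i i - L i i = ∑ j ∈ Finset.univ.filter (· ≠ i), (L i j - X i j) := by
      rw [hXrow i, hLdiag' i, Finset.sum_sub_distrib]
      ring
    have h1 : |X i i - L i i| ≤ ∑ j ∈ Finset.univ.filter (· ≠ i), |L i j - X i j| := by
      rw [h0]
      exact Finset.abs_sum_le_sum_abs _ _
    have h2 : |A i i - L i i| ≤ |A i i - X i i| + |X i i - L i i| := by
      calc |A i i - L i i| = |(A i i - X i i) + (X i i - L i i)| := by ring_nf
        _ ≤ |A i i - X i i| + |X i i - L i i| := abs_add_le _ _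
    have h3 : ∑ j ∈ Finset.univ.filter (· ≠ i), (|A i j - L i j| + |L i j - X i j|)
        ≤ ∑ j ∈ Finset.univ.filter (· ≠ i), |A i j - X i j| :=
      Finset.sum_le_sum hterm
    rw [Finset.sum_add_distrib] at h3
    linarith
end

section
/- Suppose A ∈ ℝⁿˣⁿ has nonnegative diagonal, nonpositive off-diagonal entries, and Σⱼ Aᵢⱼ > 0 for a fixed row i. Then Lᵢⱼ := Aᵢⱼ - (Σₖ Aᵢₖ)/n satisfies Lᵢᵢ ≥ 0 and Lᵢⱼ ≤ 0 for j ≠ i, and (Lᵢ₁,...,Lᵢₙ) is the unique minimizer of Σⱼ (Lᵢⱼ - Aᵢⱼ)² subject to Σⱼ Lᵢⱼ = 0, Lᵢᵢ ≥ 0, and Lᵢⱼ ≤ 0 for j ≠ i. -/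
/-- Positive-row-sum case for the 2-norm variant: if row `i` of `A` has
nonnegative diagonal, nonpositive off-diagonal entries and positive row sum,
then `Lᵢⱼ = Aᵢⱼ - (∑ k, Aᵢₖ)/n` satisfies the sign constraints and is the unique
minimizer of `∑ j, (Lᵢⱼ - Aᵢⱼ)²` subject to `∑ j, Lᵢⱼ = 0`, `Lᵢᵢ ≥ 0`,
`Lᵢⱼ ≤ 0` for `j ≠ i`. -/
theorem stmt_17 (n : ℕ) (hn : 2 ≤ n) (A : Matrix (Fin n) (Fin n) ℝ) (i : Fin n)
    (hdiag : 0 ≤ A i i) (hoff : ∀ j, j ≠ i → A i j ≤ 0)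
    (hpos : 0 < ∑ j, A i j)
    (x : Fin n → ℝ) (hx : ∀ j, x j = A i j - (∑ k, A i k) / n) :
    (0 ≤ x i) ∧ (∀ j, j ≠ i → x j ≤ 0) ∧ (∑ j, x j = 0) ∧
    (∀ y : Fin n → ℝ, (∑ j, y j = 0) → 0 ≤ y i → (∀ j, j ≠ i → y j ≤ 0) →
      ∑ j, (x j - A i j) ^ 2 ≤ ∑ j, (y j - A i j) ^ 2) ∧
    (∀ y : Fin n → ℝ, (∑ j, y j = 0) → 0 ≤ y i → (∀ j, j ≠ i → y j ≤ 0) →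
      (∀ z : Fin n → ℝ, (∑ j, z j = 0) → 0 ≤ z i → (∀ j, j ≠ i → z j ≤ 0) →
        ∑ j, (y j - A i j) ^ 2 ≤ ∑ j, (z j - A i j) ^ 2) → y = x) := by
  set s : ℝ := ∑ k, A i k with hs
  have hn0 : (0:ℝ) < n := by positivity
  have hsn : 0 < s / n := div_pos hpos hn0
  -- s ≤ A i i
  have hsle : s ≤ A i i := by
    have : s = A i i + ∑ j ∈ Finset.univ.erase i, A i j := by
      rw [hs, ← Finset.add_sum_erase _ _ (Finset.mem_univ i)]
    rw [this]
    have : ∑ j ∈ Finset.univ.erase i, A i j ≤ 0 :=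
      Finset.sum_nonpos fun j hj => hoff j (Finset.ne_of_mem_erase hj)
    linarith
  have hsum_x : ∑ j, x j = 0 := by
    simp only [hx, Finset.sum_sub_distrib, Finset.sum_const, Finset.card_univ,
      Fintype.card_fin, nsmul_eq_mul, ← hs]
    field_simp
    ring
  have hxi : 0 ≤ x i := by
    rw [hx]
    have h1 : s / n ≤ s := by
      rw [div_le_iff₀ hn0]
      have hn1 : (1:ℝ) ≤ n := by exact_mod_cast Nat.one_le_of_lt hn
      nlinarith [hpos, hn1]
    linarith
  have hxoff : ∀ j, j ≠ i → x j ≤ 0 := fun j hj => by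
    rw [hx]; have := hoff j hj; linarith
  -- Key decomposition
  have key : ∀ y : Fin n → ℝ, (∑ j, y j = 0) →
      ∑ j, (y j - A i j) ^ 2 = ∑ j, (y j - x j) ^ 2 + ∑ j, (x j - A i j) ^ 2 := by
    intro y hy
    have : ∀ j, (y j - A i j) ^ 2 = (y j - x j) ^ 2 + (x j - A i j) ^ 2
        - 2 * (s / n) * (y j - x j) := by
      intro j
      rw [hx j]; ring
    rw [Finset.sum_congr rfl fun j _ => this j]
    rw [Finset.sum_sub_distrib, Finset.sum_add_distrib, ← Finset.mul_sum,
      Finset.sum_sub_distrib, hy, hsum_x]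
    ring
  refine ⟨hxi, hxoff, hsum_x, ?_, ?_⟩
  · intro y hy _ _
    rw [key y hy]
    have : 0 ≤ ∑ j, (y j - x j) ^ 2 := Finset.sum_nonneg fun j _ => sq_nonneg _
    linarith
  · intro y hy hyi hyoff hymin
    have h1 := hymin x hsum_x hxi hxoff
    rw [key y hy] at h1
    have h2 : ∑ j, (y j - x j) ^ 2 ≤ 0 := by linarith
    funext j
    have h3 : ∀ j ∈ Finset.univ, (y j - x j) ^ 2 = 0 := by
      intro j _
      have := (Finset.sum_eq_zero_iff_of_nonneg (fun j _ => sq_nonneg (y j - x j))).mp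
        (le_antisymm h2 (Finset.sum_nonneg fun j _ => sq_nonneg _))
      exact this j (Finset.mem_univ j)
    have := h3 j (Finset.mem_univ j)
    nlinarith [this]
end

section
/- For any A ∈ ℝⁿˣⁿ, the minimum of ‖A - L‖₁ over all graph Laplacians L with support in E equals ‖A - Π(A)‖₁ + Σᵢ |Σⱼ Π(A)ᵢⱼ|, where Π(A) is the entrywise projection of A onto matrices with nonnegative diagonal, nonpositive off-diagonal entries, and zero off-diagonal entries outside E. -/
private lemma aux_max19 (a l : ℝ) (hl : 0 ≤ l) :
    |a - l| = |a - max a 0| + |max a 0 - l| := by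
  rcases le_total 0 a with h | h
  · rw [max_eq_left h]; simp
  · rw [max_eq_right h, abs_of_nonpos (by linarith), abs_of_nonpos (by linarith),
      abs_of_nonpos (by linarith)]
    ring

private lemma aux_min19 (a l : ℝ) (hl : l ≤ 0) :
    |a - l| = |a - min a 0| + |min a 0 - l| := by
  rcases le_total a 0 with h | h
  · rw [min_eq_left h]; simp
  · rw [min_eq_right h, abs_of_nonneg (by linarith), abs_of_nonneg (by linarith),
      abs_of_nonneg (by linarith)]
    ring

/-- The minimum of `‖A - L‖₁` over all graph Laplacians `L` with support in `E`
equals `‖A - Π(A)‖₁ + ∑ i, |∑ j, Π(A)ᵢⱼ|`. -/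
theorem stmt_19 (n : ℕ) (A : Matrix (Fin n) (Fin n) ℝ)
    (E : Finset (Fin n × Fin n)) (hE : ∀ p ∈ E, p.1 ≠ p.2)
    (P : Matrix (Fin n) (Fin n) ℝ)
    (hP : ∀ i j, P i j =
      if i = j then max (A i i) 0 else if (i, j) ∈ E then min (A i j) 0 else 0) :
    IsLeast {c : ℝ | ∃ L : Matrix (Fin n) (Fin n) ℝ,
        L.mulVec (fun _ => 1) = 0 ∧ (∀ i, 0 ≤ L i i) ∧
        (∀ i j, i ≠ j → L i j ≤ 0) ∧ (∀ i j, i ≠ j → (i, j) ∉ E → L i j = 0) ∧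
        c = ∑ i, ∑ j, |A i j - L i j|}
      ((∑ i, ∑ j, |A i j - P i j|) + ∑ i, |∑ j, P i j|) := by
  set s : Fin n → ℝ := fun i => ∑ j, P i j with hs
  have hPd : ∀ i, 0 ≤ P i i := by
    intro i; rw [hP]; simp
  have hPo : ∀ i j, i ≠ j → P i j ≤ 0 := by
    intro i j h; rw [hP, if_neg h]
    split
    · exact min_le_right _ _
    · exact le_rfl
  have hPz : ∀ i j, i ≠ j → (i, j) ∉ E → P i j = 0 := by
    intro i j h h'; rw [hP, if_neg h, if_neg h']
  -- sum of off-diagonal entries of row i of P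
  have hoff : ∀ i, ∑ j ∈ Finset.univ.erase i, P i j = s i - P i i := by
    intro i
    have := Finset.add_sum_erase Finset.univ (fun j => P i j) (Finset.mem_univ i)
    rw [hs]; simp only at this ⊢; linarith
  have hds : ∀ i, 0 ≤ P i i - s i := by
    intro i
    have h1 : ∑ j ∈ Finset.univ.erase i, P i j ≤ 0 :=
      Finset.sum_nonpos (fun j hj => hPo i j (Ne.symm (Finset.ne_of_mem_erase hj)))
    have := hoff i; linarith
  -- key pointwise identity for any feasible L
  have key : ∀ L : Matrix (Fin n) (Fin n) ℝ, (∀ i, 0 ≤ L i i) →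
      (∀ i j, i ≠ j → L i j ≤ 0) → (∀ i j, i ≠ j → (i, j) ∉ E → L i j = 0) →
      ∀ i j, |A i j - L i j| = |A i j - P i j| + |P i j - L i j| := by
    intro L hd ho hz i j
    by_cases hij : i = j
    · subst hij
      rw [hP i i, if_pos rfl]
      exact aux_max19 _ _ (hd i)
    · by_cases hEij : (i, j) ∈ E
      · rw [hP i j, if_neg hij, if_pos hEij]
        exact aux_min19 _ _ (ho i j hij)
      · rw [hPz i j hij hEij, hz i j hij hEij]
        simp
  constructor
  · -- membership: construct the optimal L
    set L : Matrix (Fin n) (Fin n) ℝ := fun i j =>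
      if 0 ≤ s i then (if i = j then P i i - s i else P i j)
      else (if i = j then P i i else (P i i / (P i i - s i)) * P i j) with hLdef
    have hd : ∀ i, 0 ≤ L i i := by
      intro i; rw [hLdef]; simp only
      split
      · simpa using hds i
      · simpa using hPd i
    have ho : ∀ i j, i ≠ j → L i j ≤ 0 := by
      intro i j hij; rw [hLdef]; simp only [if_neg hij]
      split
      · exact hPo i j hij
      · rename_i hsi
        have hsi' : s i < 0 := not_le.mp hsi
        have hden : 0 < P i i - s i := by have := hPd i; linarith
        have ht : 0 ≤ P i i / (P i i - s i) := div_nonneg (hPd i) hden.le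
        have := mul_nonneg ht (neg_nonneg.mpr (hPo i j hij))
        nlinarith
    have hz : ∀ i j, i ≠ j → (i, j) ∉ E → L i j = 0 := by
      intro i j hij hE'; rw [hLdef]; simp only [if_neg hij]
      rw [hPz i j hij hE']
      split <;> ring
    have hrow : ∀ i, ∑ j, L i j = 0 := by
      intro i
      rw [← Finset.add_sum_erase Finset.univ (fun j => L i j) (Finset.mem_univ i)]
      by_cases hsi : 0 ≤ s i
      · have h1 : L i i = P i i - s i := by rw [hLdef]; simp [hsi]
        have h2 : ∑ j ∈ Finset.univ.erase i, L i j
            = ∑ j ∈ Finset.univ.erase i, P i j := by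
          refine Finset.sum_congr rfl (fun j hj => ?_)
          have hij : i ≠ j := (Finset.ne_of_mem_erase hj).symm
          rw [hLdef]; simp [hsi, hij]
        rw [h1, h2, hoff i]; ring
      · have hsi' : s i < 0 := not_le.mp hsi
        have hden : P i i - s i ≠ 0 := by have := hPd i; nlinarith
        have h1 : L i i = P i i := by rw [hLdef]; simp [hsi]
        have h2 : ∑ j ∈ Finset.univ.erase i, L i j
            = (P i i / (P i i - s i)) * (s i - P i i) := by
          rw [← hoff i, Finset.mul_sum]
          refine Finset.sum_congr rfl (fun j hj => ?_)
          have hij : i ≠ j := (Finset.ne_of_mem_erase hj).symm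
          rw [hLdef]; simp [hsi, hij]
        rw [h1, h2]; field_simp; ring
    refine ⟨L, ?_, hd, ho, hz, ?_⟩
    · funext i
      have := hrow i
      simp only [Matrix.mulVec, dotProduct, mul_one, Pi.zero_apply]
      exact this
    · have hrowcost : ∀ i, ∑ j, |P i j - L i j| = |s i| := by
        intro i
        by_cases hsi : 0 ≤ s i
        · rw [Finset.sum_eq_single i]
          · have h1 : L i i = P i i - s i := by rw [hLdef]; simp [hsi]
            rw [h1, show P i i - (P i i - s i) = s i by ring, abs_of_nonneg hsi]
          · intro j _ hji
            have hij : i ≠ j := hji.symm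
            have : L i j = P i j := by rw [hLdef]; simp [hsi, hij]
            rw [this]; simp
          · intro h; exact absurd (Finset.mem_univ i) h
        · have hsi' : s i < 0 := not_le.mp hsi
          have hden : 0 < P i i - s i := by have := hPd i; linarith
          have ht1 : P i i / (P i i - s i) ≤ 1 := by
            rw [div_le_one hden]; linarith
          rw [← Finset.add_sum_erase Finset.univ _ (Finset.mem_univ i)]
          have h1 : L i i = P i i := by rw [hLdef]; simp [hsi]
          have h2 : ∑ j ∈ Finset.univ.erase i, |P i j - L i j|
              = (P i i / (P i i - s i) - 1) * (s i - P i i) := by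
            rw [← hoff i, Finset.mul_sum]
            refine Finset.sum_congr rfl (fun j hj => ?_)
            have hij : i ≠ j := (Finset.ne_of_mem_erase hj).symm
            have hL : L i j = (P i i / (P i i - s i)) * P i j := by
              rw [hLdef]; simp [hsi, hij]
            have ht2 : 0 ≤ P i i / (P i i - s i) := div_nonneg (hPd i) hden.le
            have hp := hPo i j hij
            rw [hL, abs_of_nonpos (by nlinarith)]
            ring
          rw [h1, h2, abs_of_neg hsi']
          have h3 : |P i i - P i i| = (0:ℝ) := by simp
          rw [h3]
          field_simp
          ring
      have hk := key L hd ho hz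
      calc (∑ i, ∑ j, |A i j - P i j|) + ∑ i, |s i|
          = ∑ i, ((∑ j, |A i j - P i j|) + |s i|) := by
            rw [Finset.sum_add_distrib]
        _ = ∑ i, ∑ j, |A i j - L i j| := by
            refine Finset.sum_congr rfl (fun i _ => ?_)
            simp_rw [hk i]
            rw [Finset.sum_add_distrib, hrowcost i]
  · -- lower bound
    rintro c ⟨L, hL1, hLd, hLo, hLz, rfl⟩
    have hrow : ∀ i, ∑ j, L i j = 0 := by
      intro i
      have := congrFun hL1 i
      simpa [Matrix.mulVec, dotProduct] using this
    have hk := key L hLd hLo hLz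
    have hstep : ∀ i, (∑ j, |A i j - P i j|) + |s i| ≤ ∑ j, |A i j - L i j| := by
      intro i
      have h1 : ∑ j, |A i j - L i j|
          = (∑ j, |A i j - P i j|) + ∑ j, |P i j - L i j| := by
        simp_rw [hk i]; rw [Finset.sum_add_distrib]
      have h2 : |s i| ≤ ∑ j, |P i j - L i j| := by
        have : s i = ∑ j, (P i j - L i j) := by
          rw [hs]; simp only [Finset.sum_sub_distrib, hrow i, sub_zero]
        rw [this]
        exact Finset.abs_sum_le_sum_abs _ _
      linarith
    calc (∑ i, ∑ j, |A i j - P i j|) + ∑ i, |s i|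
        = ∑ i, ((∑ j, |A i j - P i j|) + |s i|) := by rw [Finset.sum_add_distrib]
      _ ≤ ∑ i, ∑ j, |A i j - L i j| := Finset.sum_le_sum (fun i _ => hstep i)
end
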